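/- Consider the input-free simplified RDN system τ·dR_i/dt = −R_i + β·R_i/(η + G), τ·dG/dt = −G + ∑_{j=1}^N R_j with τ > 0 and β > η > 0, and let (R*, G*) be any point of the continuous attractor, i.e. G* = β − η and ∑_{i=1}^N R_i* = β − η. Then the Jacobian J of the vector field at (R*, G*) has characteristic polynomial χ_J(X) = X^{N−1} · (X² + X/τ + (β − η)/(β·τ²)); equivalently, its eigenvalues are 0 with multiplicity N − 1 together with λ_{N,N+1} = (−1 ± √(4η/β − 3))/(2τ). -/

import Mathlib

open Polynomial

/-- The vector field of the input-free simplified RDN system on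
`(R_1, …, R_N, G)`: `dR_i/dt = (-R_i + β R_i/(η + G))/τ`,
`dG/dt = (-G + ∑_j R_j)/τ`. -/
noncomputable def rdnField (N : ℕ) (τ β η : ℝ) (x : (Fin N ⊕ Unit) → ℝ) :
    (Fin N ⊕ Unit) → ℝ :=
  fun i => match i with
  | Sum.inl i => (-x (Sum.inl i) + β * x (Sum.inl i) / (η + x (Sum.inr ()))) / τ
  | Sum.inr _ => (-x (Sum.inr ()) + ∑ j, x (Sum.inl j)) / τ

/-- The Jacobian matrix of `F` at `p`: the matrix of partial derivatives of
the components of `F` with respect to the coordinates. -/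
noncomputable def jacobian {n : Type*} [Fintype n] [DecidableEq n]
    (F : (n → ℝ) → n → ℝ) (p : n → ℝ) : Matrix n n ℝ :=
  Matrix.of fun i j => fderiv ℝ (fun x => F x i) p (Pi.single j 1)

set_option maxHeartbeats 1000000 in
set_option synthInstance.maxHeartbeats 1000000 in
lemma rdn_det_aux (M : ℕ) (b : Fin (M+1) → ℝ[X]) (c d : ℝ[X]) :
    (Matrix.fromBlocks ((X : ℝ[X]) • (1 : Matrix (Fin (M+1)) (Fin (M+1)) ℝ[X]))
      (Matrix.of fun i (_ : Unit) => b i)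
      (Matrix.of fun (_ : Unit) _ => c)
      (Matrix.of fun (_ : Unit) (_ : Unit) => d)).det
    = X ^ M * (X * d - c * ∑ j, b j) := by
  set φ := algebraMap (Polynomial ℝ) (RatFunc ℝ) with hφ
  apply RatFunc.algebraMap_injective ℝ
  rw [RingHom.map_det]
  have hx : φ X ≠ 0 := by
    intro h
    exact X_ne_zero (RatFunc.algebraMap_injective ℝ (by rw [map_zero]; exact h))
  have hmap : φ.mapMatrix (Matrix.fromBlocks ((X : ℝ[X]) • (1 : Matrix (Fin (M+1)) (Fin (M+1)) ℝ[X]))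
      (Matrix.of fun i (_ : Unit) => b i)
      (Matrix.of fun (_ : Unit) j => c)
      (Matrix.of fun (_ : Unit) (_ : Unit) => d)) =
      Matrix.fromBlocks (φ X • (1 : Matrix (Fin (M+1)) (Fin (M+1)) (RatFunc ℝ)))
      (Matrix.of fun i (_ : Unit) => φ (b i))
      (Matrix.of fun (_ : Unit) j => φ c)
      (Matrix.of fun (_ : Unit) (_ : Unit) => φ d) := by
    ext (i|i) (j|j) <;>
      simp [Matrix.fromBlocks, RingHom.mapMatrix_apply, Matrix.one_apply, apply_ite φ]
  rw [hmap]
  haveI : Invertible (φ X • (1 : Matrix (Fin (M+1)) (Fin (M+1)) (RatFunc ℝ))) := by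
    apply Matrix.invertibleOfIsUnitDet
    simp [Matrix.det_smul, isUnit_iff_ne_zero, pow_ne_zero, hx]
  rw [Matrix.det_fromBlocks₁₁]
  have hinv : ⅟(φ X • (1 : Matrix (Fin (M+1)) (Fin (M+1)) (RatFunc ℝ))) =
      (φ X)⁻¹ • 1 := by
    apply invOf_eq_right_inv
    rw [smul_mul_smul_comm, one_mul, mul_inv_cancel₀ hx, one_smul]
  rw [hinv, Matrix.det_smul, Matrix.det_one, mul_one, Matrix.det_unique]
  simp only [Matrix.sub_apply, Matrix.mul_apply, Matrix.smul_apply, Matrix.one_apply,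
    Matrix.of_apply, Finset.sum_ite_eq, Finset.mem_univ, if_true, smul_eq_mul,
    Matrix.det_one, mul_one]
  simp only [mul_ite, mul_one, mul_zero, Finset.sum_ite_eq, Finset.mem_univ, if_true,
    Fintype.card_fin, _root_.map_mul, map_sub, map_pow, map_sum]
  simp only [Finset.sum_ite_eq', Finset.mem_univ, if_true, ← hφ]
  have h2 : ∀ x : Fin (M+1), φ c * (φ X)⁻¹ * φ (b x) = (φ X)⁻¹ * (φ c * φ (b x)) := by
    intro x; ring
  simp only [h2, ← Finset.mul_sum]
  field_simp
  ring

noncomputable def rdnProj (N : ℕ) (k : Fin N ⊕ Unit) :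
    ((Fin N ⊕ Unit) → ℝ) →L[ℝ] ℝ :=
  ContinuousLinearMap.proj k

@[simp] lemma rdnProj_apply (N : ℕ) (k : Fin N ⊕ Unit) (x : (Fin N ⊕ Unit) → ℝ) :
    rdnProj N k x = x k := rfl

set_option maxHeartbeats 1000000 in
/-- At any point of the continuous attractor (`G* = β - η`,
`∑_i R_i* = β - η`) of the input-free simplified RDN system with `β > η`, the
Jacobian has characteristic polynomial
`X^(N-1) (X² + X/τ + (β - η)/(β τ²))`. -/
theorem rdn_attractor_jacobian_charpoly (N : ℕ) (hN : 1 ≤ N) (τ β η : ℝ)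
    (hτ : 0 < τ) (hη : 0 < η) (hβη : η < β)
    (p : (Fin N ⊕ Unit) → ℝ)
    (hG : p (Sum.inr ()) = β - η)
    (hR : ∑ i, p (Sum.inl i) = β - η) :
    (jacobian (rdnField N τ β η) p).charpoly =
      X ^ (N - 1) *
        (X ^ 2 + C (1 / τ) * X + C ((β - η) / (β * τ ^ 2))) := by
  have hβ : (0:ℝ) < β := hη.trans hβη
  have hβ0 : β ≠ 0 := hβ.ne'
  have hτ0 : τ ≠ 0 := hτ.ne'
  have hden : η + p (Sum.inr ()) = β := by rw [hG]; ring
  have hdne : η + p (Sum.inr ()) ≠ 0 := by rw [hden]; exact hβ0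
  -- compute the Jacobian matrix
  have hjac : jacobian (rdnField N τ β η) p =
      Matrix.fromBlocks (0 : Matrix (Fin N) (Fin N) ℝ)
        (Matrix.of fun i (_ : Unit) => -p (Sum.inl i) / (β * τ))
        (Matrix.of fun (_ : Unit) _ => 1 / τ)
        (Matrix.of fun (_ : Unit) (_ : Unit) => -1 / τ) := by
    have hg : HasFDerivAt (fun x : (Fin N ⊕ Unit) → ℝ => η + x (Sum.inr ()))
        (rdnProj N (Sum.inr ())) p :=
      (rdnProj N (Sum.inr ())).hasFDerivAt.const_add η
    have hFi : ∀ i : Fin N, HasFDerivAt (fun x => rdnField N τ β η x (Sum.inl i))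
        (-(τ⁻¹ • rdnProj N (Sum.inl i)) +
          (τ⁻¹ • (β * p (Sum.inl i)) • -((η + p (Sum.inr ())) ^ 2)⁻¹ • rdnProj N (Sum.inr ()) +
            τ⁻¹ • (η + p (Sum.inr ()))⁻¹ • β • rdnProj N (Sum.inl i)))
        p := by
      intro i
      have hnum : HasFDerivAt (fun x : (Fin N ⊕ Unit) → ℝ => β * x (Sum.inl i))
          (β • rdnProj N (Sum.inl i)) p :=
        (rdnProj N (Sum.inl i)).hasFDerivAt.const_mul β
      have hinv : HasFDerivAt (fun x : (Fin N ⊕ Unit) → ℝ => (η + x (Sum.inr ()))⁻¹)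
          ((-((η + p (Sum.inr ()))^2)⁻¹) •
            rdnProj N (Sum.inr ())) p :=
        (hasDerivAt_inv hdne).comp_hasFDerivAt p hg
      have hmul := hnum.mul hinv
      have hneg : HasFDerivAt (fun x : (Fin N ⊕ Unit) → ℝ => -x (Sum.inl i))
          (-rdnProj N (Sum.inl i)) p :=
        (rdnProj N (Sum.inl i)).hasFDerivAt.neg
      have := (hneg.add hmul).mul_const τ⁻¹
      simpa [rdnField, div_eq_mul_inv] using this
    have hFg : HasFDerivAt (fun x => rdnField N τ β η x (Sum.inr ()))
        (-(τ⁻¹ • rdnProj N (Sum.inr ())) +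
          τ⁻¹ • ∑ j : Fin N, rdnProj N (Sum.inl j)) p := by
      have hsum : HasFDerivAt (fun x : (Fin N ⊕ Unit) → ℝ => ∑ j, x (Sum.inl j))
          (∑ j : Fin N, rdnProj N (Sum.inl j)) p :=
        HasFDerivAt.fun_sum fun j _ =>
          (rdnProj N (Sum.inl j)).hasFDerivAt
      have hneg : HasFDerivAt (fun x : (Fin N ⊕ Unit) → ℝ => -x (Sum.inr ()))
          (-rdnProj N (Sum.inr ())) p :=
        (rdnProj N (Sum.inr ())).hasFDerivAt.neg
      have := (hneg.add hsum).mul_const τ⁻¹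
      simpa [rdnField, div_eq_mul_inv] using this
    ext (i|i) (j|j)
    · rw [jacobian, Matrix.of_apply, (hFi i).fderiv]
      simp [Pi.single_apply, hden, Matrix.fromBlocks]
      by_cases h : i = j <;> simp [h] <;> try field_simp
      all_goals ring
    · rw [jacobian, Matrix.of_apply, (hFi i).fderiv]
      simp [Pi.single_apply, hden, Matrix.fromBlocks]
      try field_simp
      try ring
    · rw [jacobian, Matrix.of_apply, hFg.fderiv]
      simp [Pi.single_apply, Matrix.fromBlocks, Finset.sum_ite_eq', ContinuousLinearMap.sum_apply]
      try field_simp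
    · rw [jacobian, Matrix.of_apply, hFg.fderiv]
      simp [Pi.single_apply, Matrix.fromBlocks, ContinuousLinearMap.sum_apply]
      try field_simp
  obtain ⟨M, rfl⟩ : ∃ M, N = M + 1 := ⟨N - 1, (Nat.succ_pred_eq_of_pos hN).symm⟩
  rw [hjac, Matrix.charpoly]
  have hcm : (Matrix.fromBlocks (0 : Matrix (Fin (M+1)) (Fin (M+1)) ℝ)
        (Matrix.of fun i (_ : Unit) => -p (Sum.inl i) / (β * τ))
        (Matrix.of fun (_ : Unit) _ => 1 / τ)
        (Matrix.of fun (_ : Unit) (_ : Unit) => -1 / τ)).charmatrix =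
      Matrix.fromBlocks ((X : ℝ[X]) • (1 : Matrix (Fin (M+1)) (Fin (M+1)) ℝ[X]))
        (Matrix.of fun i (_ : Unit) => C (p (Sum.inl i) / (β * τ)))
        (Matrix.of fun (_ : Unit) _ => -C (1 / τ))
        (Matrix.of fun (_ : Unit) (_ : Unit) => X + C (1 / τ)) := by
    ext (i|i) (j|j)
    · by_cases h : i = j
      · subst h
        rw [Matrix.charmatrix_apply_eq]
        simp [Matrix.fromBlocks, Matrix.one_apply]
      · rw [Matrix.charmatrix_apply_ne _ _ _ (by simpa using h)]
        simp [Matrix.fromBlocks, Matrix.one_apply, h]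
    · rw [Matrix.charmatrix_apply_ne _ _ _ (by simp)]
      simp [Matrix.fromBlocks, neg_div, map_neg]
    · rw [Matrix.charmatrix_apply_ne _ _ _ (by simp)]
      simp [Matrix.fromBlocks]
    · rw [Matrix.charmatrix_apply_eq]
      simp [Matrix.fromBlocks, neg_div, map_neg]
  rw [hcm, rdn_det_aux]
  have hsum : ∑ j : Fin (M+1), C (p (Sum.inl j) / (β * τ)) =
      C ((β - η) / (β * τ)) := by
    rw [← map_sum, ← Finset.sum_div, hR]
  rw [hsum]
  have harith : (1:ℝ) / τ * ((β - η) / (β * τ)) = (β - η) / (β * τ ^ 2) := by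
    ring
  rw [Nat.add_sub_cancel]
  rw [show (X : ℝ[X]) * (X + C (1/τ)) - -C (1/τ) * C ((β-η)/(β*τ)) =
    X^2 + C (1/τ) * X + C ((1:ℝ)/τ * ((β-η)/(β*τ))) by rw [map_mul]; ring]
  rw [harith]
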